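/- Let k be a field of characteristic 0, let b ≥ 1 be an integer, and for s ≠ t in k* define the 2×2 matrix M(s,t) = (1/(s−t)) · [[s^b − t^b, s t (s^{b−1} − t^{b−1})], [s^{b+1} − t^{b+1}, s t (s^b − t^b)]]. Then M(s,t) · M(−1/s, −1/t) = (−1)^{b−1} · I₂. -/

import Mathlib

set_option maxHeartbeats 2000000


/-- The Schwarzenberger transition matrix
`M(s,t) = (1/(s−t)) ⬝ [[s^b − t^b, st(s^{b−1} − t^{b−1})],
                       [s^{b+1} − t^{b+1}, st(s^b − t^b)]]`. -/
def schwMat {k : Type*} [Field k] (b : ℕ) (s t : k) :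
    Matrix (Fin 2) (Fin 2) k :=
  (s - t)⁻¹ • !![s ^ b - t ^ b, s * t * (s ^ (b - 1) - t ^ (b - 1));
                 s ^ (b + 1) - t ^ (b + 1), s * t * (s ^ b - t ^ b)]

/-- Over a field `k` of characteristic `0`, for `b ≥ 1` and
`s ≠ t` in `k*`, one has `M(s,t) ⬝ M(−1/s, −1/t) = (−1)^{b−1} ⬝ I₂`. -/
theorem stmt10 {k : Type*} [Field k] [CharZero k] (b : ℕ) (hb : 1 ≤ b)
    (s t : k) (hs : s ≠ 0) (ht : t ≠ 0) (hst : s ≠ t) :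
    schwMat b s t * schwMat b (-1 / s) (-1 / t) =
      ((-1 : k) ^ (b - 1)) • (1 : Matrix (Fin 2) (Fin 2) k) := by
  obtain ⟨c, rfl⟩ := Nat.exists_eq_add_of_le hb
  have h1 : s - t ≠ 0 := sub_ne_zero.mpr hst
  have h2 : (-1 / s) - (-1 / t) ≠ 0 := by
    have h3 : (-1 / s) - (-1 / t) = (s - t) / (s * t) := by field_simp; ring
    rw [h3]
    exact div_ne_zero h1 (mul_ne_zero hs ht)
  have hpow : ∀ (x : k) (n : ℕ), (-1 / x) ^ n = (-1 : k) ^ n / x ^ n := by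
    intro x n; rw [div_pow]
  simp only [Nat.add_sub_cancel_left]
  rw [schwMat, schwMat, Matrix.smul_mul, Matrix.mul_smul, Matrix.mul_fin_two,
    smul_smul, Matrix.one_fin_two]
  simp only [Nat.add_sub_cancel_left, hpow]
  have hD : s ^ 3 * s ^ (c * 2) * t ^ 5 * t ^ (c * 2) -
      s ^ 4 * s ^ (c * 2) * t ^ 4 * t ^ (c * 2) * 2 +
      s ^ 5 * s ^ (c * 2) * t ^ 3 * t ^ (c * 2) ≠ 0 := by
    have hq : s ^ 3 * s ^ (c * 2) * t ^ 5 * t ^ (c * 2) -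
        s ^ 4 * s ^ (c * 2) * t ^ 4 * t ^ (c * 2) * 2 +
        s ^ 5 * s ^ (c * 2) * t ^ 3 * t ^ (c * 2) =
        (s ^ 3 * t ^ 3) * (s ^ (c * 2) * t ^ (c * 2)) * (s - t) ^ 2 := by ring
    rw [hq]
    exact mul_ne_zero (mul_ne_zero
      (mul_ne_zero (pow_ne_zero _ hs) (pow_ne_zero _ ht))
      (mul_ne_zero (pow_ne_zero _ hs) (pow_ne_zero _ ht))) (pow_ne_zero _ h1)
  rcases Nat.even_or_odd c with hc | hc
  · have e0 : ((-1 : k)) ^ c = 1 := hc.neg_one_pow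
    have e1 : ((-1 : k)) ^ (1 + c) = -1 := by rw [pow_add, pow_one, e0]; ring
    have e2 : ((-1 : k)) ^ (1 + c + 1) = 1 := by rw [pow_succ, e1]; ring
    rw [e0, e1, e2]
    ext i j
    fin_cases i <;> fin_cases j <;>
      simp only [Matrix.smul_apply, Matrix.cons_val', Matrix.cons_val_zero,
        Matrix.cons_val_one, Matrix.head_cons, Matrix.empty_val',
        Matrix.cons_val_fin_one, Matrix.head_fin_const, smul_eq_mul,
        Fin.mk_zero, Fin.mk_one, mul_one, mul_zero, Matrix.of_apply] <;>
      field_simp <;>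
      first
        | (left; trivial)
        | linear_combination mul_inv_cancel₀ hD
        | linear_combination (-1 : k) * mul_inv_cancel₀ hD
        | ring
    all_goals (rw [← sub_eq_zero]; field_simp; ring)
  · have e0 : ((-1 : k)) ^ c = -1 := hc.neg_one_pow
    have e1 : ((-1 : k)) ^ (1 + c) = 1 := by rw [pow_add, pow_one, e0]; ring
    have e2 : ((-1 : k)) ^ (1 + c + 1) = -1 := by rw [pow_succ, e1]; ring
    rw [e0, e1, e2]
    ext i j
    fin_cases i <;> fin_cases j <;>
      simp only [Matrix.smul_apply, Matrix.cons_val', Matrix.cons_val_zero,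
        Matrix.cons_val_one, Matrix.head_cons, Matrix.empty_val',
        Matrix.cons_val_fin_one, Matrix.head_fin_const, smul_eq_mul,
        Fin.mk_zero, Fin.mk_one, mul_one, mul_zero, Matrix.of_apply] <;>
      field_simp <;>
      first
        | (left; trivial)
        | linear_combination mul_inv_cancel₀ hD
        | linear_combination (-1 : k) * mul_inv_cancel₀ hD
        | ring
    all_goals (rw [← sub_eq_zero]; field_simp; ring)
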